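/- Extinction at time π/(4σ): assume ∫_ℝ exp(tan(2σt) y²/(2σ)) u₀(y) dy < ∞ for every t ∈ [0, π/(4σ)) (i.e. T = π/(4σ)). Then for every t ∈ (0, π/(4σ)): ∫_ℝ u(t,x) dx = 1 and 0 ≤ u(t,x) ≤ (2πσ tan(2σt))^{-1/2} for all x ∈ ℝ; consequently sup_{x ∈ ℝ} u(t,x) → 0 as t → (π/(4σ))⁻. -/

import Mathlib

open MeasureTheory Filter

/-- The explicit solution of the replicator-mutator equation with fitness `f(x) = x²`. -/
noncomputable def uTrig (σ : ℝ) (u₀ : ℝ → ℝ) (t x : ℝ) : ℝ :=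
  (Real.sqrt (2 * Real.pi * σ * Real.tan (2 * σ * t)))⁻¹
    * Real.exp (Real.tan (2 * σ * t) * x ^ 2 / (2 * σ))
    * (∫ y : ℝ, Real.exp (-(x / Real.cos (2 * σ * t) - y) ^ 2
        / (2 * σ * Real.tan (2 * σ * t))) * u₀ y)
    / (∫ y : ℝ, Real.exp (Real.tan (2 * σ * t) * y ^ 2 / (2 * σ)) * u₀ y)

/-- The maximal existence time `T` for the fitness `f(x) = x²`. -/
noncomputable def Tmax (σ : ℝ) (u₀ : ℝ → ℝ) : ℝ :=
  sSup {t : ℝ | 0 ≤ t ∧ t < Real.pi / (4 * σ) ∧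
    MeasureTheory.Integrable (fun y : ℝ => Real.exp (Real.tan (2 * σ * t) * y ^ 2 / (2 * σ)) * u₀ y)}

lemma key_exp_identity (σ x y θ : ℝ) (hσ : σ ≠ 0) (hs : Real.sin θ ≠ 0)
    (hc : Real.cos θ ≠ 0) :
    Real.tan θ * x ^ 2 / (2 * σ) + -(x / Real.cos θ - y) ^ 2 / (2 * σ * Real.tan θ)
      = -(Real.cos θ / (2 * σ * Real.sin θ) * (x - y / Real.cos θ) ^ 2)
        + Real.tan θ * y ^ 2 / (2 * σ) := by
  have hpyth := Real.sin_sq_add_cos_sq θ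
  rw [Real.tan_eq_sin_div_cos]
  field_simp
  linear_combination (x ^ 2 - y ^ 2) * hpyth

lemma sqrt_tendsto_atTop' : Tendsto Real.sqrt atTop atTop := by
  apply tendsto_atTop_atTop_of_monotone (fun a b h => Real.sqrt_le_sqrt h)
  intro b
  exact ⟨b ^ 2, by rw [Real.sqrt_sq_eq_abs]; exact le_abs_self b⟩

lemma uTrig_props (σ : ℝ) (hσ : 0 < σ) (u₀ : ℝ → ℝ) (hmeas : Measurable u₀)
    (hnn : ∀ x, 0 ≤ u₀ x) (hmass : ∫ y : ℝ, u₀ y = 1)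
    (t : ℝ) (ht0 : 0 < t) (ht1 : t < Real.pi / (4 * σ))
    (hI : Integrable (fun y : ℝ => Real.exp (Real.tan (2 * σ * t) * y ^ 2 / (2 * σ)) * u₀ y)) :
    (∫ x : ℝ, uTrig σ u₀ t x) = 1 ∧
      ∀ x : ℝ, 0 ≤ uTrig σ u₀ t x ∧
        uTrig σ u₀ t x ≤ (Real.sqrt (2 * Real.pi * σ * Real.tan (2 * σ * t)))⁻¹ := by
  have hθ0 : 0 < 2 * σ * t := by positivity
  have hθ2 : 2 * σ * t < Real.pi / 2 := by
    have h1 : 2 * σ * t < 2 * σ * (Real.pi / (4 * σ)) :=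
      mul_lt_mul_of_pos_left ht1 (by positivity)
    have h2 : 2 * σ * (Real.pi / (4 * σ)) = Real.pi / 2 := by
      field_simp; ring
    linarith
  set θ : ℝ := 2 * σ * t with hθdef
  have hs : 0 < Real.sin θ :=
    Real.sin_pos_of_pos_of_lt_pi hθ0 (by linarith [Real.pi_pos])
  have hc : 0 < Real.cos θ := Real.cos_pos_of_mem_Ioo ⟨by linarith, hθ2⟩
  have hτ : 0 < Real.tan θ := Real.tan_pos_of_pos_of_lt_pi_div_two hθ0 hθ2
  set τ : ℝ := Real.tan θ with hτdef
  set b : ℝ := Real.cos θ / (2 * σ * Real.sin θ) with hbdef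
  have hb : 0 < b := by positivity
  set g : ℝ → ℝ := fun y => Real.exp (τ * y ^ 2 / (2 * σ)) * u₀ y with hgdef
  have hgnn : ∀ y, 0 ≤ g y := fun y => mul_nonneg (Real.exp_pos _).le (hnn y)
  have hgm : Measurable g :=
    ((((measurable_id.pow_const 2).const_mul τ).div_const (2 * σ)).exp).mul hmeas
  have hIg : Integrable g := hI
  have hu0int : Integrable u₀ := by
    refine hIg.mono hmeas.aestronglyMeasurable (ae_of_all _ fun y => ?_)
    rw [Real.norm_eq_abs, Real.norm_eq_abs, abs_of_nonneg (hnn y), abs_of_nonneg (hgnn y)]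
    calc u₀ y = 1 * u₀ y := (one_mul _).symm
      _ ≤ Real.exp (τ * y ^ 2 / (2 * σ)) * u₀ y :=
        mul_le_mul_of_nonneg_right (Real.one_le_exp (by positivity)) (hnn y)
  set D : ℝ := ∫ y, g y with hDdef
  have hD1 : 1 ≤ D := by
    rw [← hmass]
    refine integral_mono hu0int hIg fun y => ?_
    calc u₀ y = 1 * u₀ y := (one_mul _).symm
      _ ≤ Real.exp (τ * y ^ 2 / (2 * σ)) * u₀ y :=
        mul_le_mul_of_nonneg_right (Real.one_le_exp (by positivity)) (hnn y)
  have hD0 : 0 < D := lt_of_lt_of_le one_pos hD1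
  set K : ℝ := Real.sqrt (2 * Real.pi * σ * τ) with hKdef
  have hK0 : 0 < K := Real.sqrt_pos.mpr (by positivity)
  -- the pointwise key identity
  have hkey : ∀ x y : ℝ,
      Real.exp (τ * x ^ 2 / (2 * σ)) *
          (Real.exp (-(x / Real.cos θ - y) ^ 2 / (2 * σ * τ)) * u₀ y)
        = Real.exp (-(b * (x - y / Real.cos θ) ^ 2)) * g y := by
    intro x y
    rw [hgdef, ← mul_assoc, ← mul_assoc, ← Real.exp_add, ← Real.exp_add,
      key_exp_identity σ x y θ hσ.ne' hs.ne' hc.ne']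
  -- Gaussian integral of the shifted kernel
  have hGauss : ∀ m : ℝ, (∫ x : ℝ, Real.exp (-(b * (x - m) ^ 2))) = Real.sqrt (Real.pi / b) := by
    intro m
    have h1 : (∫ x : ℝ, Real.exp (-(b * (x - m) ^ 2)))
        = ∫ x : ℝ, Real.exp (-b * x ^ 2) := by
      rw [← integral_sub_right_eq_self (fun x : ℝ => Real.exp (-b * x ^ 2)) m]
      simp only [neg_mul]
    rw [h1, integral_gaussian]
  have hKb : Real.sqrt (Real.pi / b) = K := by
    rw [hKdef]
    congr 1
    rw [hbdef, hτdef, Real.tan_eq_sin_div_cos]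
    field_simp
  -- integrability of the kernel in y for fixed x
  have hFy : ∀ x : ℝ, Integrable (fun y => Real.exp (-(b * (x - y / Real.cos θ) ^ 2)) * g y) := by
    intro x
    refine hIg.mono ?_ (ae_of_all _ fun y => ?_)
    · exact (((((measurable_const.sub (measurable_id.div_const (Real.cos θ))).pow_const
        2).const_mul b).neg).exp.mul hgm).aestronglyMeasurable
    · rw [Real.norm_eq_abs, Real.norm_eq_abs,
        abs_of_nonneg (mul_nonneg (Real.exp_pos _).le (hgnn y)), abs_of_nonneg (hgnn y)]
      calc Real.exp (-(b * (x - y / Real.cos θ) ^ 2)) * g y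
          ≤ 1 * g y := mul_le_mul_of_nonneg_right
            (Real.exp_le_one_iff.mpr (neg_nonpos.mpr (by positivity))) (hgnn y)
        _ = g y := one_mul _
  -- integrability of the kernel in x for fixed y
  have hFx : ∀ y : ℝ, Integrable (fun x => Real.exp (-(b * (x - y / Real.cos θ) ^ 2)) * g y) := by
    intro y
    have h1 : Integrable (fun x : ℝ => Real.exp (-b * x ^ 2)) := integrable_exp_neg_mul_sq hb
    have h2 := (h1.comp_sub_right (y / Real.cos θ)).mul_const (g y)
    refine h2.congr (ae_of_all _ fun x => ?_)
    simp only [neg_mul]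
  -- pointwise bound on kernel
  have hFle : ∀ x y : ℝ, Real.exp (-(b * (x - y / Real.cos θ) ^ 2)) * g y ≤ g y := by
    intro x y
    calc Real.exp (-(b * (x - y / Real.cos θ) ^ 2)) * g y
        ≤ 1 * g y := mul_le_mul_of_nonneg_right
          (Real.exp_le_one_iff.mpr (neg_nonpos.mpr (by positivity))) (hgnn y)
      _ = g y := one_mul _
  -- inner x-integral
  have hinner : ∀ y : ℝ,
      (∫ x : ℝ, Real.exp (-(b * (x - y / Real.cos θ) ^ 2)) * g y) = K * g y := by
    intro y
    rw [integral_mul_const, hGauss (y / Real.cos θ), hKb]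
  -- integrability on the product space
  have hFint : Integrable (Function.uncurry fun x y =>
      Real.exp (-(b * (x - y / Real.cos θ) ^ 2)) * g y)
      ((volume : Measure ℝ).prod volume) := by
    have hFm : AEStronglyMeasurable (Function.uncurry fun x y =>
        Real.exp (-(b * (x - y / Real.cos θ) ^ 2)) * g y)
        ((volume : Measure ℝ).prod volume) :=
      ((((((measurable_fst.sub (measurable_snd.div_const (Real.cos θ))).pow_const
        2).const_mul b).neg).exp).mul (hgm.comp measurable_snd)).aestronglyMeasurable
    refine (MeasureTheory.integrable_prod_iff' hFm).mpr ⟨ae_of_all _ fun y => hFx y, ?_⟩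
    refine (hIg.const_mul K).congr (ae_of_all _ fun y => ?_)
    exact (hinner y).symm.trans (integral_congr_ae (ae_of_all _ fun x =>
      (Real.norm_of_nonneg (mul_nonneg (Real.exp_pos _).le (hgnn y))).symm))
  -- the rewritten form of uTrig
  have hEI : ∀ x : ℝ,
      Real.exp (τ * x ^ 2 / (2 * σ)) *
          (∫ y : ℝ, Real.exp (-(x / Real.cos θ - y) ^ 2 / (2 * σ * τ)) * u₀ y)
        = ∫ y : ℝ, Real.exp (-(b * (x - y / Real.cos θ) ^ 2)) * g y := by
    intro x
    rw [← integral_const_mul]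
    exact integral_congr_ae (ae_of_all _ fun y => hkey x y)
  have huT : ∀ x : ℝ, uTrig σ u₀ t x
      = K⁻¹ * D⁻¹ * ∫ y : ℝ, Real.exp (-(b * (x - y / Real.cos θ) ^ 2)) * g y := by
    intro x
    show K⁻¹ * Real.exp (τ * x ^ 2 / (2 * σ)) *
        (∫ y : ℝ, Real.exp (-(x / Real.cos θ - y) ^ 2 / (2 * σ * τ)) * u₀ y) / D = _
    rw [mul_assoc, hEI x, div_eq_mul_inv]
    ring
  constructor
  · -- mass is one
    have h1 : (∫ x : ℝ, uTrig σ u₀ t x)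
        = K⁻¹ * D⁻¹ * ∫ x : ℝ, ∫ y : ℝ, Real.exp (-(b * (x - y / Real.cos θ) ^ 2)) * g y := by
      rw [← integral_const_mul]
      exact integral_congr_ae (ae_of_all _ fun x => huT x)
    rw [h1, MeasureTheory.integral_integral_swap hFint]
    have h2 : (∫ y : ℝ, ∫ x : ℝ, Real.exp (-(b * (x - y / Real.cos θ) ^ 2)) * g y)
        = K * D := by
      rw [← integral_const_mul]
      exact integral_congr_ae (ae_of_all _ fun y => hinner y)
    rw [h2]
    field_simp
  · -- pointwise bounds
    intro x
    have hInn : (0:ℝ) ≤ ∫ y : ℝ, Real.exp (-(b * (x - y / Real.cos θ) ^ 2)) * g y :=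
      integral_nonneg fun y => mul_nonneg (Real.exp_pos _).le (hgnn y)
    have hle : (∫ y : ℝ, Real.exp (-(b * (x - y / Real.cos θ) ^ 2)) * g y) ≤ D :=
      integral_mono (hFy x) hIg fun y => hFle x y
    constructor
    · rw [huT x]
      positivity
    · rw [huT x, mul_assoc]
      calc K⁻¹ * (D⁻¹ * ∫ y : ℝ, Real.exp (-(b * (x - y / Real.cos θ) ^ 2)) * g y)
          ≤ K⁻¹ * (D⁻¹ * D) := by
            refine mul_le_mul_of_nonneg_left (mul_le_mul_of_nonneg_left hle ?_) ?_ <;> positivity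
        _ = K⁻¹ := by rw [inv_mul_cancel₀ hD0.ne', mul_one]

theorem extinction_at_THeat_pos_quadratic
    (σ : ℝ) (hσ : 0 < σ) (u₀ : ℝ → ℝ) (hmeas : Measurable u₀)
    (hnn : ∀ x, 0 ≤ u₀ x) (hmass : ∫ y : ℝ, u₀ y = 1)
    (hint : ∀ t : ℝ, 0 ≤ t → t < Real.pi / (4 * σ) →
      Integrable (fun y : ℝ => Real.exp (Real.tan (2 * σ * t) * y ^ 2 / (2 * σ)) * u₀ y)) :
    (∀ t : ℝ, 0 < t → t < Real.pi / (4 * σ) →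
      (∫ x : ℝ, uTrig σ u₀ t x) = 1 ∧
      ∀ x : ℝ, 0 ≤ uTrig σ u₀ t x ∧
        uTrig σ u₀ t x ≤ (Real.sqrt (2 * Real.pi * σ * Real.tan (2 * σ * t)))⁻¹) ∧
    Tendsto (fun t => ⨆ x : ℝ, uTrig σ u₀ t x)
      (nhdsWithin (Real.pi / (4 * σ)) (Set.Iio (Real.pi / (4 * σ)))) (nhds 0) := by
  have hmain : ∀ t : ℝ, 0 < t → t < Real.pi / (4 * σ) →
      (∫ x : ℝ, uTrig σ u₀ t x) = 1 ∧
      ∀ x : ℝ, 0 ≤ uTrig σ u₀ t x ∧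
        uTrig σ u₀ t x ≤ (Real.sqrt (2 * Real.pi * σ * Real.tan (2 * σ * t)))⁻¹ :=
    fun t ht0 ht1 => uTrig_props σ hσ u₀ hmeas hnn hmass t ht0 ht1 (hint t ht0.le ht1)
  refine ⟨hmain, ?_⟩
  set T0 : ℝ := Real.pi / (4 * σ) with hT0def
  have hT0 : 0 < T0 := by rw [hT0def]; positivity
  have hev : ∀ᶠ t in nhdsWithin T0 (Set.Iio T0), 0 < t ∧ t < T0 := by
    filter_upwards [self_mem_nhdsWithin,
      eventually_nhdsWithin_of_eventually_nhds (eventually_gt_nhds hT0)] with t h1 h2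
    exact ⟨h2, h1⟩
  have hsup0 : ∀ᶠ t in nhdsWithin T0 (Set.Iio T0), 0 ≤ ⨆ x : ℝ, uTrig σ u₀ t x := by
    filter_upwards [hev] with t ht
    obtain ⟨-, hb⟩ := hmain t ht.1 ht.2
    have hbdd : BddAbove (Set.range fun x => uTrig σ u₀ t x) :=
      ⟨(Real.sqrt (2 * Real.pi * σ * Real.tan (2 * σ * t)))⁻¹, by
        rintro - ⟨x, rfl⟩; exact (hb x).2⟩
    exact (hb 0).1.trans (le_ciSup hbdd 0)
  have hsup_le : ∀ᶠ t in nhdsWithin T0 (Set.Iio T0),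
      (⨆ x : ℝ, uTrig σ u₀ t x) ≤ (Real.sqrt (2 * Real.pi * σ * Real.tan (2 * σ * t)))⁻¹ := by
    filter_upwards [hev] with t ht
    obtain ⟨-, hb⟩ := hmain t ht.1 ht.2
    exact ciSup_le fun x => (hb x).2
  have h2σ : Tendsto (fun t => 2 * σ * t) (nhdsWithin T0 (Set.Iio T0))
      (nhdsWithin (Real.pi / 2) (Set.Iio (Real.pi / 2))) := by
    apply tendsto_nhdsWithin_of_tendsto_nhds_of_eventually_within
    · have hc : Tendsto (fun t : ℝ => 2 * σ * t) (nhds T0) (nhds (2 * σ * T0)) :=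
        (continuous_const.mul continuous_id).tendsto T0
      have h2 : 2 * σ * T0 = Real.pi / 2 := by rw [hT0def]; field_simp; ring
      rw [h2] at hc
      exact hc.mono_left nhdsWithin_le_nhds
    · filter_upwards [self_mem_nhdsWithin] with t ht
      have h1 : 2 * σ * t < 2 * σ * T0 := mul_lt_mul_of_pos_left ht (by positivity)
      have h2 : 2 * σ * T0 = Real.pi / 2 := by rw [hT0def]; field_simp; ring
      exact Set.mem_Iio.mpr (by linarith)
  have htan : Tendsto (fun t => Real.tan (2 * σ * t)) (nhdsWithin T0 (Set.Iio T0)) atTop :=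
    Real.tendsto_tan_pi_div_two.comp h2σ
  have hmul : Tendsto (fun t => 2 * Real.pi * σ * Real.tan (2 * σ * t))
      (nhdsWithin T0 (Set.Iio T0)) atTop :=
    htan.const_mul_atTop (by positivity)
  have hsqrt : Tendsto (fun t => Real.sqrt (2 * Real.pi * σ * Real.tan (2 * σ * t)))
      (nhdsWithin T0 (Set.Iio T0)) atTop := sqrt_tendsto_atTop'.comp hmul
  have hinv : Tendsto (fun t => (Real.sqrt (2 * Real.pi * σ * Real.tan (2 * σ * t)))⁻¹)
      (nhdsWithin T0 (Set.Iio T0)) (nhds 0) := tendsto_inv_atTop_zero.comp hsqrt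
  exact squeeze_zero' hsup0 hsup_le hinv
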